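/- Canonical model H-existence lemma: if H_F φ ∉ hd(w), then for any nonempty coalition E ⊆ F and any operation δ, there exist canonical states w', u, u' with w ∼_F w', (w',E,δ,u) ∈ M, u ∼_F u', and φ ∉ hd(u'). The key step is: at least one of the sets X = {¬K_{𝒜∖E}(K_E δ → K_F φ)} ∪ {ψ : K_F ψ ∈ hd(w)} and Y = {¬H_E δ, ¬K_{𝒜∖E} K_F φ} ∪ {ψ : K_F ψ ∈ hd(w)} is consistent. -/

import Mathlib

/-- Formulas of the logic of clandestine operations: propositional variables,
falsum, negation, implication, distributed knowledge `know C φ` and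
clandestine power `how C φ` for coalitions `C ⊆ Ag`. -/
inductive Formula (α : Type) (Ag : Type) : Type
  | var  : α → Formula α Ag
  | bot  : Formula α Ag
  | neg  : Formula α Ag → Formula α Ag
  | imp  : Formula α Ag → Formula α Ag → Formula α Ag
  | know : Set Ag → Formula α Ag → Formula α Ag
  | how  : Set Ag → Formula α Ag → Formula α Ag

namespace Formula

/-- Defined disjunction. -/
def or {α Ag : Type} (φ ψ : Formula α Ag) : Formula α Ag := imp (neg φ) ψ

/-- Defined verum. -/
def top {α Ag : Type} : Formula α Ag := neg bot

/-- Boolean evaluation treating variables and modal formulas as atoms. -/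
def eval {α Ag : Type} (v : Formula α Ag → Bool) : Formula α Ag → Bool
  | var p => v (var p)
  | bot => false
  | neg φ => !(eval v φ)
  | imp φ ψ => !(eval v φ) || eval v ψ
  | know C φ => v (know C φ)
  | how C φ => v (how C φ)

end Formula

/-- A propositional tautology: true under every Boolean valuation of its
atoms (variables and modal subformulas). -/
def Tautology {α Ag : Type} (φ : Formula α Ag) : Prop :=
  ∀ v, φ.eval v = true

/-- Theorems of the logic of clandestine operations. -/
inductive Prov {α Ag : Type} : Formula α Ag → Prop
  | taut {φ} : Tautology φ → Prov φ
  | truth (C : Set Ag) (φ) : Prov (.imp (.know C φ) φ)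
  | negIntro (C : Set Ag) (φ) :
      Prov (.imp (.neg (.know C φ)) (.know C (.neg (.know C φ))))
  | distrib (C : Set Ag) (φ ψ) :
      Prov (.imp (.know C (.imp φ ψ)) (.imp (.know C φ) (.know C ψ)))
  | mono {C' C : Set Ag} (φ) : C' ⊆ C → Prov (.imp (.know C' φ) (.know C φ))
  | stratIntro (C : Set Ag) (φ) : Prov (.imp (.how C φ) (.know C (.how C φ)))
  | cia {C I A : Set Ag} (φ ψ) : C ∩ (I ∪ A) = ∅ →
      Prov (.imp
        (.know (C ∪ I) (.know (A ∪ I) (.imp (.know C φ) (.know (C ∪ I) ψ))))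
        (.imp (.how C φ) (.how (C ∪ I) ψ)))
  | nonterm (C : Set Ag) : Prov (.neg (.how C .bot))
  | emptyCoal (φ : Formula α Ag) : Prov (.neg (.how ∅ φ))
  | mp {φ ψ} : Prov (.imp φ ψ) → Prov φ → Prov ψ
  | necK (C : Set Ag) {φ} : Prov φ → Prov (.know C φ)
  | necH {C : Set Ag} {φ} : C ≠ ∅ → Prov φ → Prov (.how C φ)

/-- Derivability from a set of hypotheses `X`: from theorems of the system
and members of `X` using Modus Ponens only. -/
inductive ProvFrom {α Ag : Type} (X : Set (Formula α Ag)) : Formula α Ag → Prop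
  | hyp {φ} : φ ∈ X → ProvFrom X φ
  | thm {φ} : Prov φ → ProvFrom X φ
  | mp {φ ψ} : ProvFrom X (.imp φ ψ) → ProvFrom X φ → ProvFrom X ψ

/-- A set of formulas is consistent if falsum is not derivable from it. -/
def Consistent {α Ag : Type} (X : Set (Formula α Ag)) : Prop :=
  ¬ ProvFrom X .bot

/-- Maximal consistent set of formulas. -/
def MCS {α Ag : Type} (X : Set (Formula α Ag)) : Prop :=
  Consistent X ∧ ∀ φ : Formula α Ag, φ ∈ X ∨ .neg φ ∈ X

/-- Canonical states are lists of (coalition, maximal consistent set) steps,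
most recent step first, rooted at the fixed maximal consistent set `X₀`.
`hd X₀ w` is the maximal consistent set labelling the node `w`. -/
def hd {α Ag : Type} (X₀ : Set (Formula α Ag)) :
    List (Set Ag × Set (Formula α Ag)) → Set (Formula α Ag)
  | [] => X₀
  | (_, X) :: _ => X

/-- The canonical-state condition: every set along the path is maximal
consistent and contains everything known (to the edge coalition) at its
parent. -/
def IsCanState {α Ag : Type} (X₀ : Set (Formula α Ag)) :
    List (Set Ag × Set (Formula α Ag)) → Prop
  | [] => True
  | (C, X) :: w => IsCanState X₀ w ∧ MCS X ∧
      {φ : Formula α Ag | Formula.know C φ ∈ hd X₀ w} ⊆ X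

/-- Canonical indistinguishability for agent `a`: all edges on the simple
tree path between `w` and `w'` (through a common ancestor `v`) are labelled
with a coalition containing `a`. -/
def CSim {α Ag : Type} (a : Ag)
    (w w' : List (Set Ag × Set (Formula α Ag))) : Prop :=
  ∃ v, v <:+ w ∧ v <:+ w' ∧
    (∀ p ∈ w.take (w.length - v.length), a ∈ p.1) ∧
    (∀ p ∈ w'.take (w'.length - v.length), a ∈ p.1)

/-- Canonical coalition indistinguishability. -/
def CSimC {α Ag : Type} (C : Set Ag)
    (w w' : List (Set Ag × Set (Formula α Ag))) : Prop :=
  ∀ a ∈ C, CSim a w w'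

/-- The canonical mechanism: `(w, C, φ, u) ∈ M` iff `w ∼_{𝒜∖C} u` and
`H_C φ ∈ hd w` implies `K_C φ ∈ hd u`. -/
def CanM {α Ag : Type} (X₀ : Set (Formula α Ag))
    (w : List (Set Ag × Set (Formula α Ag))) (C : Set Ag) (φ : Formula α Ag)
    (u : List (Set Ag × Set (Formula α Ag))) : Prop :=
  CSimC Cᶜ w u ∧ (Formula.how C φ ∈ hd X₀ w → Formula.know C φ ∈ hd X₀ u)

section CLAux

variable {α Ag : Type}

/-- Iterated implication. -/
def impList (L : List (Formula α Ag)) (φ : Formula α Ag) : Formula α Ag :=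
  L.foldr .imp φ

lemma eval_impList (v : Formula α Ag → Bool) (L : List (Formula α Ag))
    (φ : Formula α Ag) :
    Formula.eval v (impList L φ) =
      (!(L.all (Formula.eval v)) || Formula.eval v φ) := by
  induction L with
  | nil => simp [impList]
  | cons a L ih =>
      simp only [impList, List.foldr_cons, Formula.eval, List.all_cons,
        Bool.not_and, Bool.or_assoc] at *
      rw [ih]

lemma impList_mp {L₁ L₂ : List (Formula α Ag)} {φ ψ : Formula α Ag}
    (h1 : Prov (impList L₁ (.imp φ ψ))) (h2 : Prov (impList L₂ φ)) :
    Prov (impList (L₁ ++ L₂) ψ) := by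
  have t : Tautology (.imp (impList L₁ (.imp φ ψ))
      (.imp (impList L₂ φ) (impList (L₁ ++ L₂) ψ))) := by
    intro v
    simp only [Formula.eval, eval_impList, List.all_append, Bool.not_and]
    cases L₁.all (Formula.eval v) <;> cases L₂.all (Formula.eval v) <;>
      cases Formula.eval v φ <;> cases Formula.eval v ψ <;> rfl
  exact (Prov.mp (Prov.mp (Prov.taut t) h1) h2)

lemma provFrom_finite {X : Set (Formula α Ag)} {φ : Formula α Ag}
    (h : ProvFrom X φ) :
    ∃ L : List (Formula α Ag), (∀ ψ ∈ L, ψ ∈ X) ∧ Prov (impList L φ) := by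
  induction h with
  | hyp hm =>
      exact ⟨[_], by simpa using hm, Prov.taut (by
        intro v
        simp only [impList, List.foldr_cons, List.foldr_nil, Formula.eval]
        cases Formula.eval v _ <;> rfl)⟩
  | thm hp => exact ⟨[], by simp, hp⟩
  | mp h1 h2 ih1 ih2 =>
      obtain ⟨L₁, hL₁, p₁⟩ := ih1
      obtain ⟨L₂, hL₂, p₂⟩ := ih2
      refine ⟨L₁ ++ L₂, ?_, impList_mp p₁ p₂⟩
      intro ψ hψ
      rcases List.mem_append.1 hψ with h | h
      · exact hL₁ ψ h
      · exact hL₂ ψ h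

lemma provFrom_impList {X : Set (Formula α Ag)} {L : List (Formula α Ag)}
    {φ : Formula α Ag} (hL : ∀ ψ ∈ L, ψ ∈ X)
    (h : ProvFrom X (impList L φ)) : ProvFrom X φ := by
  induction L with
  | nil => exact h
  | cons a L ih =>
      exact ih (fun ψ hψ => hL ψ (List.mem_cons_of_mem _ hψ))
        (h.mp (.hyp (hL a (List.mem_cons_self))))

/-- Deduction theorem. -/
lemma deduction {X : Set (Formula α Ag)} {φ ψ : Formula α Ag}
    (h : ProvFrom (insert φ X) ψ) : ProvFrom X (.imp φ ψ) := by
  induction h with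
  | @hyp χ hm =>
      rcases Set.mem_insert_iff.1 hm with rfl | hm
      · exact .thm (Prov.taut (by
          intro v; simp only [Formula.eval]
          cases Formula.eval v χ <;> rfl))
      · exact .mp (.thm (Prov.taut (by
          intro v; simp only [Formula.eval]
          cases Formula.eval v χ <;> cases Formula.eval v φ <;> rfl)))
          (.hyp hm)
  | @thm χ hp =>
      exact .mp (.thm (Prov.taut (by
        intro v; simp only [Formula.eval]
        cases Formula.eval v χ <;> cases Formula.eval v φ <;> rfl)))
        (.thm hp)
  | @mp χ ψ' h1 h2 ih1 ih2 =>
      exact .mp (.mp (.thm (Prov.taut (by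
        intro v; simp only [Formula.eval]
        cases Formula.eval v φ <;> cases Formula.eval v χ <;>
          cases Formula.eval v ψ' <;> rfl))) ih1) ih2

lemma provFrom_mono {X Y : Set (Formula α Ag)} (hXY : X ⊆ Y)
    {φ : Formula α Ag} (h : ProvFrom X φ) : ProvFrom Y φ := by
  induction h with
  | hyp hm => exact .hyp (hXY hm)
  | thm hp => exact .thm hp
  | mp _ _ ih1 ih2 => exact .mp ih1 ih2

lemma consistent_mono {X Y : Set (Formula α Ag)} (hXY : X ⊆ Y)
    (h : Consistent Y) : Consistent X :=
  fun hbot => h (provFrom_mono hXY hbot)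

/-- Lindenbaum lemma. -/
lemma lindenbaum {X : Set (Formula α Ag)} (h : Consistent X) :
    ∃ M, X ⊆ M ∧ MCS M := by
  obtain ⟨M, hXM, hMmem, hMmax⟩ :=
    zorn_subset_nonempty {Y : Set (Formula α Ag) | Consistent Y}
      (fun c hc hchain hcne => by
        refine ⟨⋃₀ c, ?_, fun s hs => Set.subset_sUnion_of_mem hs⟩
        intro hbot
        obtain ⟨L, hL, hp⟩ := provFrom_finite hbot
        obtain ⟨s₀, hs₀⟩ := hcne
        have : ∃ s ∈ c, ∀ ψ ∈ L, ψ ∈ s := by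
          clear hp
          induction L with
          | nil => exact ⟨s₀, hs₀, by simp⟩
          | cons a L ih =>
              obtain ⟨s, hs, hLs⟩ := ih (fun ψ hψ => hL ψ (List.mem_cons_of_mem _ hψ))
              obtain ⟨t, ht, hat⟩ := hL a (List.mem_cons_self)
              rcases hchain.total hs ht with hst | hts
              · exact ⟨t, ht, by
                  intro ψ hψ
                  rcases List.mem_cons.1 hψ with rfl | hψ
                  · exact hat
                  · exact hst (hLs ψ hψ)⟩
              · exact ⟨s, hs, by
                  intro ψ hψ
                  rcases List.mem_cons.1 hψ with rfl | hψ
                  · exact hts hat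
                  · exact hLs ψ hψ⟩
        obtain ⟨s, hsc, hLs⟩ := this
        exact hc hsc (provFrom_impList hLs (.thm hp)))
      X h
  refine ⟨M, hXM, hMmem, ?_⟩
  intro χ
  by_contra hcon
  push_neg at hcon
  obtain ⟨h1, h2⟩ := hcon
  have hmax : ∀ ψ : Formula α Ag, ψ ∉ M → ¬ Consistent (insert ψ M) := by
    intro ψ hψ hcons
    have := hMmax (y := insert ψ M) hcons (Set.subset_insert _ _)
    exact hψ (this (Set.mem_insert _ _))
  have d1 : ProvFrom M (.imp χ .bot) :=
    deduction (not_not.1 (hmax χ h1))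
  have d2 : ProvFrom M (.imp (.neg χ) .bot) :=
    deduction (not_not.1 (hmax _ h2))
  apply hMmem
  refine ProvFrom.mp (ProvFrom.mp (.thm (Prov.taut ?_)) d1) d2
  intro v; simp only [Formula.eval]
  cases Formula.eval v χ <;> rfl

lemma mcs_not_both {M : Set (Formula α Ag)} (hM : MCS M) {χ : Formula α Ag}
    (h1 : χ ∈ M) (h2 : Formula.neg χ ∈ M) : False := by
  apply hM.1
  refine ProvFrom.mp (ProvFrom.mp (.thm (Prov.taut ?_)) (.hyp h1)) (.hyp h2)
  intro v; simp only [Formula.eval]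
  cases Formula.eval v χ <;> rfl

lemma mcs_closed {M : Set (Formula α Ag)} (hM : MCS M) {χ : Formula α Ag}
    (h : ProvFrom M χ) : χ ∈ M := by
  rcases hM.2 χ with h1 | h1
  · exact h1
  · exfalso
    apply hM.1
    refine ProvFrom.mp (ProvFrom.mp (.thm (Prov.taut ?_)) h) (.hyp h1)
    intro v; simp only [Formula.eval]
    cases Formula.eval v χ <;> rfl

lemma mcs_neg_iff {M : Set (Formula α Ag)} (hM : MCS M) {χ : Formula α Ag} :
    Formula.neg χ ∈ M ↔ χ ∉ M := by
  constructor
  · intro h1 h2; exact mcs_not_both hM h2 h1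
  · intro h1; rcases hM.2 χ with h | h
    · exact absurd h h1
    · exact h

lemma prov_imp_trans {a b c : Formula α Ag} (h1 : Prov (.imp a b))
    (h2 : Prov (.imp b c)) : Prov (.imp a c) := by
  refine Prov.mp (Prov.mp (Prov.taut ?_) h1) h2
  intro v; simp only [Formula.eval]
  cases Formula.eval v a <;> cases Formula.eval v b <;>
    cases Formula.eval v c <;> rfl

lemma kmap (C : Set Ag) {a b : Formula α Ag} (h : Prov (.imp a b)) :
    Prov (.imp (.know C a) (.know C b)) :=
  Prov.mp (Prov.distrib C a b) (Prov.necK C h)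

lemma know_impList (C : Set Ag) (L : List (Formula α Ag)) (φ : Formula α Ag) :
    Prov (.imp (.know C (impList L φ))
      (impList (L.map (.know C)) (.know C φ))) := by
  induction L with
  | nil =>
      refine Prov.taut ?_
      intro v
      simp only [impList, List.map_nil, List.foldr_nil, Formula.eval]
      cases v (Formula.know C φ) <;> rfl
  | cons a L ih =>
      have h1 : Prov (.imp (.know C (impList (a :: L) φ))
          (.imp (.know C a) (.know C (impList L φ)))) :=
        Prov.distrib C a (impList L φ)
      -- combine h1 with ih
      refine Prov.mp (Prov.mp (Prov.taut ?_) h1) ih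
      intro v; simp only [impList, List.map_cons, List.foldr_cons, Formula.eval]
      cases v (Formula.know C (List.foldr Formula.imp φ L)) <;>
        cases v (Formula.know C (Formula.imp a (List.foldr Formula.imp φ L))) <;>
        cases v (Formula.know C a) <;>
        cases Formula.eval v (List.foldr Formula.imp (Formula.know C φ)
          (List.map (Formula.know C) L)) <;> rfl

lemma kclose {M : Set (Formula α Ag)} (hM : MCS M) {F : Set Ag}
    {γ : Formula α Ag}
    (h : ProvFrom {ψ | Formula.know F ψ ∈ M} γ) : Formula.know F γ ∈ M := by
  obtain ⟨L, hL, hp⟩ := provFrom_finite h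
  have h2 : Prov (impList (L.map (.know F)) (.know F γ)) :=
    Prov.mp (know_impList F L γ) (Prov.necK F hp)
  refine mcs_closed hM (provFrom_impList ?_ (.thm h2))
  intro ψ hψ
  obtain ⟨χ, hχL, rfl⟩ := List.mem_map.1 hψ
  exact hL χ hχL

lemma kext {M : Set (Formula α Ag)} (hM : MCS M) {C : Set Ag}
    {χ : Formula α Ag} (h : Formula.neg (.know C χ) ∈ M) :
    Consistent (insert (Formula.neg χ) {ψ | Formula.know C ψ ∈ M}) := by
  intro hbot
  have h1 : ProvFrom {ψ | Formula.know C ψ ∈ M} (.imp (.neg χ) .bot) :=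
    deduction hbot
  have h2 : ProvFrom {ψ | Formula.know C ψ ∈ M} χ := by
    refine ProvFrom.mp (.thm (Prov.taut ?_)) h1
    intro v; simp only [Formula.eval]
    cases Formula.eval v χ <;> rfl
  exact mcs_not_both hM (kclose hM h2) h

lemma mcs_hd {X₀ : Set (Formula α Ag)} (hX₀ : MCS X₀)
    {w : List (Set Ag × Set (Formula α Ag))} (hw : IsCanState X₀ w) :
    MCS (hd X₀ w) := by
  cases w with
  | nil => exact hX₀
  | cons p w => exact hw.2.1

lemma csimC_step {C D : Set Ag} (h : C ⊆ D) (p : Set (Formula α Ag))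
    (w : List (Set Ag × Set (Formula α Ag))) :
    CSimC C w ((D, p) :: w) := by
  intro a ha
  refine ⟨w, List.suffix_refl w, List.suffix_cons _ _, ?_, ?_⟩
  · simp
  · intro q hq
    simp only [List.length_cons, Nat.add_sub_cancel_left, Nat.add_sub_cancel,
      List.take_succ_cons, List.take_zero, List.mem_singleton] at hq
    subst hq
    exact h ha

end CLAux

lemma build_states {α Ag : Type} {X₀ : Set (Formula α Ag)}
    {w : List (Set Ag × Set (Formula α Ag))}
    (hw : IsCanState X₀ w) {F E : Set Ag} {δ φ : Formula α Ag}
    {W U : Set (Formula α Ag)} (hW : MCS W)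
    (hWsub : {ψ | Formula.know F ψ ∈ hd X₀ w} ⊆ W)
    (hU : MCS U) (hUsub : {ψ | Formula.know Eᶜ ψ ∈ W} ⊆ U)
    (hmech : Formula.how E δ ∈ W → Formula.know E δ ∈ U)
    (hKF : Formula.know F φ ∉ U) :
    ∃ w' u u', IsCanState X₀ w' ∧ IsCanState X₀ u ∧ IsCanState X₀ u' ∧
      CSimC F w w' ∧ CanM X₀ w' E δ u ∧ CSimC F u u' ∧
      φ ∉ hd X₀ u' := by
  have hnegKF : Formula.neg (.know F φ) ∈ U := (mcs_neg_iff hU).2 hKF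
  obtain ⟨U', hU'sub, hU'⟩ := lindenbaum (kext hU hnegKF)
  refine ⟨(F, W) :: w, (Eᶜ, U) :: (F, W) :: w,
    (F, U') :: (Eᶜ, U) :: (F, W) :: w, ⟨hw, hW, hWsub⟩,
    ⟨⟨hw, hW, hWsub⟩, hU, hUsub⟩,
    ⟨⟨⟨hw, hW, hWsub⟩, hU, hUsub⟩, hU',
      fun ψ hψ => hU'sub (Set.mem_insert_of_mem _ hψ)⟩,
    csimC_step subset_rfl W w, ⟨csimC_step subset_rfl U _, hmech⟩,
    csimC_step subset_rfl U' _, ?_⟩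
  intro hmem
  exact mcs_not_both hU' hmem (hU'sub (Set.mem_insert _ _))


/-- Canonical H-existence lemma: if `H_F φ ∉ hd w` then, for any nonempty
`E ⊆ F` and any operation `δ`, at least one of the sets
`X = {¬K_{𝒜∖E}(K_E δ → K_F φ)} ∪ {ψ : K_F ψ ∈ hd w}` and
`Y = {¬H_E δ, ¬K_{𝒜∖E} K_F φ} ∪ {ψ : K_F ψ ∈ hd w}` is consistent, and
there are canonical states `w'`, `u`, `u'` with `w ∼_F w'`,
`(w',E,δ,u) ∈ M`, `u ∼_F u'`, and `φ ∉ hd u'`. -/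
theorem how_exists {α Ag : Type} {X₀ : Set (Formula α Ag)} (hX₀ : MCS X₀)
    {w : List (Set Ag × Set (Formula α Ag))} (hw : IsCanState X₀ w)
    {F E : Set Ag} {φ : Formula α Ag}
    (h : Formula.how F φ ∉ hd X₀ w) (hE : E ⊆ F) (hEne : E.Nonempty)
    (δ : Formula α Ag) :
    (Consistent ({Formula.neg (.know Eᶜ (.imp (.know E δ) (.know F φ)))} ∪
        {ψ | Formula.know F ψ ∈ hd X₀ w}) ∨
     Consistent ({Formula.neg (.how E δ),
        Formula.neg (.know Eᶜ (.know F φ))} ∪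
        {ψ | Formula.know F ψ ∈ hd X₀ w})) ∧
    ∃ w' u u', IsCanState X₀ w' ∧ IsCanState X₀ u ∧ IsCanState X₀ u' ∧
      CSimC F w w' ∧ CanM X₀ w' E δ u ∧ CSimC F u u' ∧
      φ ∉ hd X₀ u' := by
  have hM : MCS (hd X₀ w) := mcs_hd hX₀ hw
  have hEF : E ≠ ∅ := hEne.ne_empty
  -- set algebra for the CIA instantiation
  have hCI : E ∪ (F \ E) = F := Set.union_diff_cancel hE
  have hAI : Fᶜ ∪ (F \ E) = Eᶜ := by
    ext x
    constructor
    · rintro (hx | hx)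
      · exact fun hxE => hx (hE hxE)
      · exact hx.2
    · intro hx
      by_cases hxF : x ∈ F
      · exact Or.inr ⟨hxF, hx⟩
      · exact Or.inl hxF
  have hdisj : E ∩ ((F \ E) ∪ Fᶜ) = ∅ := by
    ext x
    simp only [Set.mem_inter_iff, Set.mem_union, Set.mem_diff,
      Set.mem_compl_iff, Set.mem_empty_iff_false, iff_false, not_and]
    rintro hxE (⟨_, hx⟩ | hx)
    · exact hx hxE
    · exact hx (hE hxE)
  have hdich : (Consistent
      ({Formula.neg (.know Eᶜ (.imp (.know E δ) (.know F φ)))} ∪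
        {ψ | Formula.know F ψ ∈ hd X₀ w}) ∨
      Consistent ({Formula.neg (.how E δ),
        Formula.neg (.know Eᶜ (.know F φ))} ∪
        {ψ | Formula.know F ψ ∈ hd X₀ w})) := by
    by_contra hcon
    push_neg at hcon
    obtain ⟨h1, h2⟩ := hcon
    rw [Set.singleton_union] at h1
    rw [Set.insert_union, Set.singleton_union] at h2
    -- from ¬Consistent X : S ⊢ K_{Eᶜ}(K_E δ → K_F φ)
    have d1 : ProvFrom {ψ | Formula.know F ψ ∈ hd X₀ w}
        (.imp (.neg (.know Eᶜ (.imp (.know E δ) (.know F φ)))) .bot) :=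
      deduction (not_not.1 h1)
    have hθ₁ : ProvFrom {ψ | Formula.know F ψ ∈ hd X₀ w}
        (.know Eᶜ (.imp (.know E δ) (.know F φ))) := by
      refine ProvFrom.mp (.thm (Prov.taut ?_)) d1
      intro v; simp only [Formula.eval]
      cases v (Formula.know Eᶜ (.imp (.know E δ) (.know F φ))) <;> rfl
    have k1 : Formula.know F (.know Eᶜ (.imp (.know E δ) (.know F φ)))
        ∈ hd X₀ w := kclose hM hθ₁
    -- from ¬Consistent Y : S ⊢ ¬K_E H_E δ → K_{Eᶜ} K_F φ
    have d2 : ProvFrom {ψ | Formula.know F ψ ∈ hd X₀ w}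
        (.imp (.neg (.know Eᶜ (.know F φ)))
          (.imp (.neg (.how E δ)) .bot)) :=
      deduction (deduction (not_not.1 h2))
    have hor : ProvFrom {ψ | Formula.know F ψ ∈ hd X₀ w}
        (.imp (.neg (.know E (.how E δ))) (.know Eᶜ (.know F φ))) := by
      refine ProvFrom.mp (ProvFrom.mp (.thm (Prov.taut ?_)) d2)
        (.thm (Prov.stratIntro E δ))
      intro v; simp only [Formula.eval]
      cases v (Formula.how E δ) <;>
        cases v (Formula.know Eᶜ (.know F φ)) <;>
        cases v (Formula.know E (.how E δ)) <;> rfl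
    have k2 : Formula.know F
        (.imp (.neg (.know E (.how E δ))) (.know Eᶜ (.know F φ)))
        ∈ hd X₀ w := kclose hM hor
    -- lemma: K_F(K_E a ∨ b) → K_E a ∨ K_F b
    have L1 : Prov (.imp
        (.know F (.imp (.neg (.know E (.how E δ))) (.know Eᶜ (.know F φ))))
        (.imp (.neg (.know E (.how E δ)))
          (.know F (.know Eᶜ (.know F φ))))) := by
      have p1 := Prov.negIntro E (.how E δ)
      have p2 := Prov.mono (C' := E) (C := F)
        (Formula.neg (.know E (.how E δ))) hE
      have p3 := Prov.distrib F (.neg (.know E (.how E δ)))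
        (.know Eᶜ (.know F φ))
      refine Prov.mp (Prov.mp (Prov.mp (Prov.taut ?_) p1) p2) p3
      intro v; simp only [Formula.eval]
      cases v (Formula.know E (.how E δ)) <;>
        cases v (Formula.know E (.neg (.know E (.how E δ)))) <;>
        cases v (Formula.know F (.neg (.know E (.how E δ)))) <;>
        cases v (Formula.know F
          (.imp (.neg (.know E (.how E δ))) (.know Eᶜ (.know F φ)))) <;>
        cases v (Formula.know F (.know Eᶜ (.know F φ))) <;> rfl
    rcases hM.2 (.know E (.how E δ)) with hk | hnk
    · -- CIA with operation δ
      have hhow : Formula.how E δ ∈ hd X₀ w :=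
        mcs_closed hM (.mp (.thm (Prov.truth E _)) (.hyp hk))
      have hcia := Prov.cia (C := E) (I := F \ E) (A := Fᶜ) δ φ hdisj
      rw [hCI, hAI] at hcia
      exact h (mcs_closed hM (.mp (.mp (.thm hcia) (.hyp k1)) (.hyp hhow)))
    · -- CIA with operation ⊤
      have hk2 : Formula.know F (.know Eᶜ (.know F φ)) ∈ hd X₀ w :=
        mcs_closed hM (.mp (.mp (.thm L1) (.hyp k2)) (.hyp hnk))
      have step : Prov (.imp (.know F (.know Eᶜ (.know F φ)))
          (.know F (.know Eᶜ
            (.imp (.know E Formula.top) (.know F φ))))) := by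
        refine kmap F (kmap Eᶜ (Prov.taut ?_))
        intro v; simp only [Formula.eval]
        cases v (Formula.know F φ) <;>
          cases v (Formula.know E Formula.top) <;> rfl
      have hcia2 := Prov.cia (C := E) (I := F \ E) (A := Fᶜ)
        Formula.top φ hdisj
      rw [hCI, hAI] at hcia2
      have htopE : Prov (Formula.how E (Formula.top : Formula α Ag)) :=
        Prov.necH hEF (Prov.taut (by
          intro v; simp [Formula.top, Formula.eval]))
      have hk3 : Formula.know F (.know Eᶜ
          (.imp (.know E Formula.top) (.know F φ))) ∈ hd X₀ w :=
        mcs_closed hM (.mp (.thm step) (.hyp hk2))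
      exact h (mcs_closed hM
        (.mp (.mp (.thm hcia2) (.hyp hk3)) (.thm htopE)))
  refine ⟨hdich, ?_⟩
  rcases hdich with hc | hc
  · -- case X consistent
    rw [Set.singleton_union] at hc
    obtain ⟨W, hWsub0, hW⟩ := lindenbaum hc
    have hγ : Formula.neg (.know Eᶜ (.imp (.know E δ) (.know F φ))) ∈ W :=
      hWsub0 (Set.mem_insert _ _)
    obtain ⟨U, hUsub0, hU⟩ := lindenbaum (kext hW hγ)
    have hnegimp : Formula.neg (.imp (.know E δ) (.know F φ)) ∈ U :=
      hUsub0 (Set.mem_insert _ _)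
    have hKEδ : Formula.know E δ ∈ U := by
      refine mcs_closed hU (.mp (.thm (Prov.taut ?_)) (.hyp hnegimp))
      intro v; simp only [Formula.eval]
      cases v (Formula.know E δ) <;> cases v (Formula.know F φ) <;> rfl
    have hKFφ : Formula.know F φ ∉ U := by
      intro hmem
      apply mcs_not_both hU (χ := Formula.imp (.know E δ) (.know F φ))
        ?_ hnegimp
      refine mcs_closed hU (.mp (.thm (Prov.taut ?_)) (.hyp hmem))
      intro v; simp only [Formula.eval]
      cases v (Formula.know E δ) <;> cases v (Formula.know F φ) <;> rfl
    exact build_states hw hW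
      (fun ψ hψ => hWsub0 (Set.mem_insert_of_mem _ hψ)) hU
      (fun ψ hψ => hUsub0 (Set.mem_insert_of_mem _ hψ))
      (fun _ => hKEδ) hKFφ
  · -- case Y consistent
    rw [Set.insert_union, Set.singleton_union] at hc
    obtain ⟨W, hWsub0, hW⟩ := lindenbaum hc
    have hnh : Formula.neg (.how E δ) ∈ W := hWsub0 (Set.mem_insert _ _)
    have hnθ₂ : Formula.neg (.know Eᶜ (.know F φ)) ∈ W :=
      hWsub0 (Set.mem_insert_of_mem _ (Set.mem_insert _ _))
    obtain ⟨U, hUsub0, hU⟩ := lindenbaum (kext hW hnθ₂)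
    have hnKF : Formula.neg (.know F φ) ∈ U := hUsub0 (Set.mem_insert _ _)
    exact build_states hw hW
      (fun ψ hψ => hWsub0 (Set.mem_insert_of_mem _
        (Set.mem_insert_of_mem _ hψ))) hU
      (fun ψ hψ => hUsub0 (Set.mem_insert_of_mem _ hψ))
      (fun hh => absurd hh ((mcs_neg_iff hW).1 hnh))
      ((mcs_neg_iff hU).1 hnKF)
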